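/- arXiv:1704.05257 — 2 statements merged into one kernel-verified Lean document; each statement's English description precedes it below -/
import Mathlib

section
/- Let G be the graph obtained from K_{s,t} by attaching a ≥ 1 pendent vertices to u and b ≥ 1 pendent vertices to v, where u, v are distinct vertices of the same part of K_{s,t} (s,t ≥ 2), and let G' be obtained by moving all a pendent edges from u to v. Then WW(G') − WW(G) = −7ab, where WW is the hyper-Wiener index. -/
open Finset
open scoped Classical

/-- Wiener index: sum of distances over unordered pairs of vertices. -/
noncomputable def wiener {V : Type*} [Fintype V] (G : SimpleGraph V) : ℚ :=
  (1/2) * ∑ u : V, ∑ v : V, (G.dist u v : ℚ)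

/-- Harary index: sum of reciprocal distances over unordered pairs of distinct vertices. -/
noncomputable def harary {V : Type*} [Fintype V] (G : SimpleGraph V) : ℚ :=
  (1/2) * ∑ p ∈ Finset.univ.offDiag, (1 : ℚ) / (G.dist p.1 p.2 : ℚ)

/-- Hyper-Wiener index: (1/2) Σ_{unordered pairs} (d + d²). -/
noncomputable def hyperWiener {V : Type*} [Fintype V] (G : SimpleGraph V) : ℚ :=
  (1/4) * ∑ u : V, ∑ v : V, ((G.dist u v : ℚ) + (G.dist u v : ℚ)^2)

/-- Eccentricity of a vertex: maximum distance to any other vertex. -/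
noncomputable def ecc {V : Type*} [Fintype V] (G : SimpleGraph V) (u : V) : ℕ :=
  Finset.univ.sup (fun v => G.dist u v)

/-- Connective eccentricity index: Σ_u deg(u)/ε(u). -/
noncomputable def cei {V : Type*} [Fintype V] (G : SimpleGraph V) : ℚ :=
  ∑ u : V, (G.degree u : ℚ) / (ecc G u : ℚ)

/-- Eccentricity distance sum: Σ_u ε(u)·D(u). -/
noncomputable def eds {V : Type*} [Fintype V] (G : SimpleGraph V) : ℚ :=
  ∑ u : V, (ecc G u : ℚ) * ∑ v : V, (G.dist u v : ℚ)

/-- The graph obtained from the complete bipartite graph `K_{s,t}` (first part `Fin s`,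
second part `Fin t`) by attaching `a` pendant vertices to the vertex `u` and `b` pendant
vertices to the vertex `v`, where `u v : Fin s` are in the same part. -/
def KstPend (s t a b : ℕ) (u v : Fin s) :
    SimpleGraph ((Fin s ⊕ Fin t) ⊕ (Fin a ⊕ Fin b)) :=
  SimpleGraph.fromRel (fun x y =>
    (∃ i j, x = Sum.inl (Sum.inl i) ∧ y = Sum.inl (Sum.inr j)) ∨
    (∃ p, x = Sum.inr (Sum.inl p) ∧ y = Sum.inl (Sum.inl u)) ∨
    (∃ q, x = Sum.inr (Sum.inr q) ∧ y = Sum.inl (Sum.inl v)))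


lemma sum_if_eq {n : ℕ} (w : Fin n) (c d : ℚ) :
    ∑ i : Fin n, (if i = w then c else d) = c + ((n:ℚ) - 1) * d := by
  have h : ∀ i : Fin n, (if i = w then c else d) = d + (if i = w then c - d else 0) := by
    intro i; split <;> ring
  simp only [h, Finset.sum_add_distrib, Finset.sum_ite_eq' Finset.univ w,
    Finset.sum_const, Finset.card_univ, Fintype.card_fin, nsmul_eq_mul,
    Finset.mem_univ, if_true]
  ring

lemma sum_if_eq' {n : ℕ} (w : Fin n) (c d : ℚ) :
    ∑ i : Fin n, (if w = i then c else d) = c + ((n:ℚ) - 1) * d := by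
  rw [← sum_if_eq w c d]
  exact Finset.sum_congr rfl (fun i _ => by simp [eq_comm])

lemma cast_if_F (c : Prop) [inst : Decidable c] (x y : ℕ) :
    ((if c then x else y : ℕ) : ℚ) + ((if c then x else y : ℕ) : ℚ)^2
      = if c then ((x:ℚ) + (x:ℚ)^2) else ((y:ℚ) + (y:ℚ)^2) := by
  split <;> rfl


lemma pendant_dist {V : Type*} {G : SimpleGraph V} {x c : V}
    (hadj : G.Adj x c) (huniq : ∀ w, G.Adj x w → w = c) {y : V}
    (hxy : y ≠ x) (hre : G.Reachable c y) :
    G.dist x y = 1 + G.dist c y := by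
  obtain ⟨p, hp⟩ := hre.exists_walk_length_eq_dist
  have hle : G.dist x y ≤ 1 + G.dist c y := by
    have := SimpleGraph.dist_le (SimpleGraph.Walk.cons hadj p)
    simp [hp] at this; omega
  have hre2 : G.Reachable x y := ⟨SimpleGraph.Walk.cons hadj p⟩
  have hne : G.dist x y ≠ 0 := by
    simp [SimpleGraph.dist_eq_zero_iff_eq_or_not_reachable, hre2, Ne.symm hxy]
  obtain ⟨q, hq⟩ := SimpleGraph.exists_walk_of_dist_ne_zero hne
  cases q with
  | nil => exact (hxy rfl).elim
  | cons h r =>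
    have hw := huniq _ h
    subst hw
    have := SimpleGraph.dist_le r
    simp [SimpleGraph.Walk.length_cons] at hq
    omega

lemma dist_eq_two' {V : Type*} {G : SimpleGraph V} {x y : V}
    (hne : x ≠ y) (hnadj : ¬ G.Adj x y) (z : V) (h1 : G.Adj x z) (h2 : G.Adj z y) :
    G.dist x y = 2 := by
  have hle : G.dist x y ≤ 2 := by
    have := SimpleGraph.dist_le (SimpleGraph.Walk.cons h1 (SimpleGraph.Walk.cons h2 SimpleGraph.Walk.nil))
    simpa using this
  have h0 : G.dist x y ≠ 0 := by
    simp [SimpleGraph.dist_eq_zero_iff_eq_or_not_reachable, hne,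
      SimpleGraph.Reachable.trans h1.reachable h2.reachable]
  have h1' : G.dist x y ≠ 1 := by simp [hnadj]
  omega

variable {s t a b : ℕ} {u v : Fin s}

lemma adj_AB (i : Fin s) (j : Fin t) :
    (KstPend s t a b u v).Adj (Sum.inl (Sum.inl i)) (Sum.inl (Sum.inr j)) := by
  simp [KstPend, SimpleGraph.fromRel_adj]

lemma adj_PA (p : Fin a) :
    (KstPend s t a b u v).Adj (Sum.inr (Sum.inl p)) (Sum.inl (Sum.inl u)) := by
  simp [KstPend, SimpleGraph.fromRel_adj]

lemma adj_QA (q : Fin b) :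
    (KstPend s t a b u v).Adj (Sum.inr (Sum.inr q)) (Sum.inl (Sum.inl v)) := by
  simp [KstPend, SimpleGraph.fromRel_adj]

lemma not_adj_AA (i j : Fin s) :
    ¬ (KstPend s t a b u v).Adj (Sum.inl (Sum.inl i)) (Sum.inl (Sum.inl j)) := by
  simp [KstPend, SimpleGraph.fromRel_adj]

lemma not_adj_BB (i j : Fin t) :
    ¬ (KstPend s t a b u v).Adj (Sum.inl (Sum.inr i)) (Sum.inl (Sum.inr j)) := by
  simp [KstPend, SimpleGraph.fromRel_adj]

lemma P_adj_iff (p : Fin a) (w) :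
    (KstPend s t a b u v).Adj (Sum.inr (Sum.inl p)) w ↔ w = Sum.inl (Sum.inl u) := by
  constructor
  · intro h
    rw [KstPend, SimpleGraph.fromRel_adj] at h
    obtain ⟨hne, h | h⟩ := h <;> rcases h with h | h | h <;> simp_all
  · rintro rfl; exact adj_PA p

lemma Q_adj_iff (q : Fin b) (w) :
    (KstPend s t a b u v).Adj (Sum.inr (Sum.inr q)) w ↔ w = Sum.inl (Sum.inl v) := by
  constructor
  · intro h
    rw [KstPend, SimpleGraph.fromRel_adj] at h
    obtain ⟨hne, h | h⟩ := h <;> rcases h with h | h | h <;> simp_all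
  · rintro rfl; exact adj_QA q

lemma reach_A (ht : 1 ≤ t) (i k : Fin s) :
    (KstPend s t a b u v).Reachable (Sum.inl (Sum.inl i)) (Sum.inl (Sum.inl k)) :=
  (adj_AB i ⟨0, ht⟩).reachable.trans (adj_AB k ⟨0, ht⟩).symm.reachable

lemma reach_all (ht : 1 ≤ t) (x) (k : Fin s) :
    (KstPend s t a b u v).Reachable x (Sum.inl (Sum.inl k)) := by
  obtain (i | j) | (p | q) := x
  · exact reach_A ht i k
  · exact (adj_AB k j).symm.reachable.trans (reach_A ht k k)
  · exact (adj_PA p).reachable.trans (reach_A ht u k)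
  · exact (adj_QA q).reachable.trans (reach_A ht v k)

lemma KstPend_reach (ht : 1 ≤ t) (x y) :
    (KstPend s t a b u v).Reachable x y :=
  (reach_all ht x u).trans (reach_all ht y u).symm

def Dfun (s : ℕ) (t : ℕ) (a : ℕ) (b : ℕ) (u v : Fin s) :
    ((Fin s ⊕ Fin t) ⊕ (Fin a ⊕ Fin b)) → ((Fin s ⊕ Fin t) ⊕ (Fin a ⊕ Fin b)) → ℕ
  | Sum.inl (Sum.inl i), Sum.inl (Sum.inl j) => if i = j then 0 else 2
  | Sum.inl (Sum.inl _), Sum.inl (Sum.inr _) => 1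
  | Sum.inl (Sum.inl i), Sum.inr (Sum.inl _) => if i = u then 1 else 3
  | Sum.inl (Sum.inl i), Sum.inr (Sum.inr _) => if i = v then 1 else 3
  | Sum.inl (Sum.inr _), Sum.inl (Sum.inl _) => 1
  | Sum.inl (Sum.inr i), Sum.inl (Sum.inr j) => if i = j then 0 else 2
  | Sum.inl (Sum.inr _), Sum.inr _ => 2
  | Sum.inr _, Sum.inl (Sum.inr _) => 2
  | Sum.inr (Sum.inl _), Sum.inl (Sum.inl i) => if i = u then 1 else 3
  | Sum.inr (Sum.inr _), Sum.inl (Sum.inl i) => if i = v then 1 else 3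
  | Sum.inr (Sum.inl p), Sum.inr (Sum.inl q) => if p = q then 0 else 2
  | Sum.inr (Sum.inr p), Sum.inr (Sum.inr q) => if p = q then 0 else 2
  | Sum.inr (Sum.inl _), Sum.inr (Sum.inr _) => if u = v then 2 else 4
  | Sum.inr (Sum.inr _), Sum.inr (Sum.inl _) => if u = v then 2 else 4

lemma KstPend_dist (ht : 1 ≤ t) (x y) :
    (KstPend s t a b u v).dist x y = Dfun s t a b u v x y := by
  have dAA : ∀ i j : Fin s, (KstPend s t a b u v).dist (Sum.inl (Sum.inl i)) (Sum.inl (Sum.inl j))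
      = if i = j then 0 else 2 := by
    intro i j
    by_cases h : i = j
    · simp [h, SimpleGraph.dist_self]
    · rw [if_neg h]
      exact dist_eq_two' (by simp [h]) (not_adj_AA i j) (Sum.inl (Sum.inr ⟨0, ht⟩))
        (adj_AB i ⟨0, ht⟩) (adj_AB j ⟨0, ht⟩).symm
  have dAB : ∀ (i : Fin s) (j : Fin t),
      (KstPend s t a b u v).dist (Sum.inl (Sum.inl i)) (Sum.inl (Sum.inr j)) = 1 :=
    fun i j => SimpleGraph.dist_eq_one_iff_adj.2 (adj_AB i j)
  have dBA : ∀ (j : Fin t) (i : Fin s),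
      (KstPend s t a b u v).dist (Sum.inl (Sum.inr j)) (Sum.inl (Sum.inl i)) = 1 := by
    intro j i; rw [SimpleGraph.dist_comm]; exact dAB i j
  have dBB : ∀ i j : Fin t, (KstPend s t a b u v).dist (Sum.inl (Sum.inr i)) (Sum.inl (Sum.inr j))
      = if i = j then 0 else 2 := by
    intro i j
    by_cases h : i = j
    · simp [h, SimpleGraph.dist_self]
    · rw [if_neg h]
      exact dist_eq_two' (by simp [h]) (not_adj_BB i j) (Sum.inl (Sum.inl u))
        (adj_AB u i).symm (adj_AB u j)
  have dP : ∀ (p : Fin a) (y), y ≠ Sum.inr (Sum.inl p) →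
      (KstPend s t a b u v).dist (Sum.inr (Sum.inl p)) y
        = 1 + (KstPend s t a b u v).dist (Sum.inl (Sum.inl u)) y := by
    intro p y hy
    exact pendant_dist (adj_PA p) (fun w hw => (P_adj_iff p w).1 hw) hy
      (KstPend_reach ht _ _)
  have dQ : ∀ (q : Fin b) (y), y ≠ Sum.inr (Sum.inr q) →
      (KstPend s t a b u v).dist (Sum.inr (Sum.inr q)) y
        = 1 + (KstPend s t a b u v).dist (Sum.inl (Sum.inl v)) y := by
    intro q y hy
    exact pendant_dist (adj_QA q) (fun w hw => (Q_adj_iff q w).1 hw) hy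
      (KstPend_reach ht _ _)
  obtain (i | j) | (p | q) := x <;> obtain (i' | j') | (p' | q') := y
  · exact dAA i i'
  · exact dAB i j'
  · rw [SimpleGraph.dist_comm, dP p' _ (by simp), dAA u i]
    simp only [Dfun, eq_comm]; split_ifs <;> omega
  · rw [SimpleGraph.dist_comm, dQ q' _ (by simp), dAA v i]
    simp only [Dfun, eq_comm]; split_ifs <;> omega
  · exact dBA j i'
  · exact dBB j j'
  · rw [SimpleGraph.dist_comm, dP p' _ (by simp), SimpleGraph.dist_comm, dBA j u]; rfl
  · rw [SimpleGraph.dist_comm, dQ q' _ (by simp), SimpleGraph.dist_comm, dBA j v]; rfl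
  · rw [dP p _ (by simp), dAA u i']
    simp only [Dfun, eq_comm]; split_ifs <;> omega
  · rw [dP p _ (by simp), dAB u j']; rfl
  · by_cases h : p = p'
    · simp [h, SimpleGraph.dist_self, Dfun]
    · rw [dP p _ (by simp [Ne.symm h]), SimpleGraph.dist_comm,
        dP p' _ (by simp), dAA u u]
      simp [Dfun, h]
  · rw [dP p _ (by simp), SimpleGraph.dist_comm, dQ q' _ (by simp), dAA v u]
    simp only [Dfun, eq_comm]; split_ifs <;> omega
  · rw [dQ q _ (by simp), dAA v i']
    simp only [Dfun, eq_comm]; split_ifs <;> omega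
  · rw [dQ q _ (by simp), dAB v j']; rfl
  · rw [dQ q _ (by simp), SimpleGraph.dist_comm, dP p' _ (by simp), dAA u v]
    simp only [Dfun, eq_comm]; split_ifs <;> omega
  · by_cases h : q = q'
    · simp [h, SimpleGraph.dist_self, Dfun]
    · rw [dQ q _ (by simp [Ne.symm h]), SimpleGraph.dist_comm,
        dQ q' _ (by simp), dAA v v]
      simp [Dfun, h]


/-- Moving all `a` pendant edges from `u` to `v` changes the hyper-Wiener index by
exactly `-7ab`. -/
theorem hyperWiener_move_pendants (s t a b : ℕ) (hs : 2 ≤ s) (ht : 2 ≤ t)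
    (ha : 1 ≤ a) (hb : 1 ≤ b) (u v : Fin s) (huv : u ≠ v) :
    hyperWiener (KstPend s t a b v v) - hyperWiener (KstPend s t a b u v)
      = -7 * (a : ℚ) * b := by
  have ht1 : 1 ≤ t := by omega
  have hne : ¬ (u = v) := huv
  unfold hyperWiener
  simp only [KstPend_dist ht1]
  simp only [Fintype.sum_sum_type, Dfun, cast_if_F]
  simp [sum_if_eq, sum_if_eq', hne, Finset.sum_add_distrib, Finset.sum_const,
        Finset.card_univ, Fintype.card_fin, nsmul_eq_mul, mul_ite]
  push_cast
  ring
end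

section
/- For positive integers n, k, x with 2 ≤ x ≤ n−k−x, the connective eccentricity index of B_k(x, n−k−x) equals (−5x² + (5n−5k−1)x + 4k + n)/6. -/
open Finset
open scoped Classical

/-- `Bgraph x y k w`: the bipartite graph obtained from the complete bipartite graph
`K_{x,y}` (parts `Fin x` and `Fin y`) by attaching `k` pendant vertices to the vertex `w`
of the part of size `x`. With `y = n - k - x` this is the graph `B_k(x, n-k-x)`. -/
def Bgraph (x y k : ℕ) (w : Fin x) : SimpleGraph ((Fin x ⊕ Fin y) ⊕ Fin k) :=
  SimpleGraph.fromRel (fun p q =>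
    (∃ i j, p = Sum.inl (Sum.inl i) ∧ q = Sum.inl (Sum.inr j)) ∨
    (∃ m, p = Sum.inr m ∧ q = Sum.inl (Sum.inl w)))


/-! ### Auxiliary distance lemmas -/

section DistHelpers
variable {V : Type*} {G : SimpleGraph V} {u v : V}

lemma dist_le_two' (z : V) (h1 : G.Adj u z) (h2 : G.Adj z v) : G.dist u v ≤ 2 := by
  have := SimpleGraph.dist_le (SimpleGraph.Walk.cons h1 (SimpleGraph.Walk.cons h2 SimpleGraph.Walk.nil))
  simpa using this

lemma dist_le_three' (z z' : V) (h1 : G.Adj u z) (h2 : G.Adj z z') (h3 : G.Adj z' v) :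
    G.dist u v ≤ 3 := by
  have := SimpleGraph.dist_le (SimpleGraph.Walk.cons h1 (SimpleGraph.Walk.cons h2
    (SimpleGraph.Walk.cons h3 SimpleGraph.Walk.nil)))
  simpa using this

lemma dist_eq_two'_s14 (hne : u ≠ v) (hadj : ¬ G.Adj u v) (z : V) (h1 : G.Adj u z)
    (h2 : G.Adj z v) : G.dist u v = 2 := by
  have hle := dist_le_two' z h1 h2
  interval_cases h : G.dist u v
  · rcases SimpleGraph.dist_eq_zero_iff_eq_or_not_reachable.mp h with h' | h'
    · exact absurd h' hne
    · exact absurd ((SimpleGraph.Walk.cons h1 (SimpleGraph.Walk.cons h2 SimpleGraph.Walk.nil)).reachable) h'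
  · exact absurd (SimpleGraph.dist_eq_one_iff_adj.mp h) hadj
  · rfl

lemma exists_mid_of_dist_eq_two (h : G.dist u v = 2) : ∃ z, G.Adj u z ∧ G.Adj z v := by
  obtain ⟨p, hp⟩ := SimpleGraph.exists_walk_of_dist_ne_zero (G := G) (u := u) (v := v) (by omega)
  rw [h] at hp
  cases p with
  | nil => simp at hp
  | cons h1 q =>
    cases q with
    | nil => simp at hp
    | cons h2 r =>
      cases r with
      | nil => exact ⟨_, h1, h2⟩
      | cons h3 s => simp [SimpleGraph.Walk.length_cons] at hp

lemma dist_eq_three' (hne : u ≠ v) (hadj : ¬ G.Adj u v)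
    (hno : ∀ z, ¬(G.Adj u z ∧ G.Adj z v)) (z z' : V)
    (h1 : G.Adj u z) (h2 : G.Adj z z') (h3 : G.Adj z' v) : G.dist u v = 3 := by
  have hle := dist_le_three' z z' h1 h2 h3
  interval_cases h : G.dist u v
  · rcases SimpleGraph.dist_eq_zero_iff_eq_or_not_reachable.mp h with h' | h'
    · exact absurd h' hne
    · exact absurd ((SimpleGraph.Walk.cons h1 (SimpleGraph.Walk.cons h2
        (SimpleGraph.Walk.cons h3 SimpleGraph.Walk.nil))).reachable) h'
  · exact absurd (SimpleGraph.dist_eq_one_iff_adj.mp h) hadj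
  · obtain ⟨z0, hz1, hz2⟩ := exists_mid_of_dist_eq_two h
    exact absurd ⟨hz1, hz2⟩ (hno z0)
  · rfl

end DistHelpers

/-! ### Structure of `Bgraph` -/

section B
variable {x y k : ℕ} {w : Fin x}

lemma badj (p q : (Fin x ⊕ Fin y) ⊕ Fin k) : (Bgraph x y k w).Adj p q ↔
    (∃ i j, p = .inl (.inl i) ∧ q = .inl (.inr j)) ∨
    (∃ i j, p = .inl (.inr j) ∧ q = .inl (.inl i)) ∨
    (∃ m, p = .inr m ∧ q = .inl (.inl w)) ∨
    (∃ m, p = .inl (.inl w) ∧ q = .inr m) := by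
  simp only [Bgraph, SimpleGraph.fromRel_adj]
  constructor
  · rintro ⟨hne, (⟨i, j, rfl, rfl⟩ | ⟨m, rfl, rfl⟩) | (⟨i, j, rfl, rfl⟩ | ⟨m, rfl, rfl⟩)⟩
    · exact Or.inl ⟨i, j, rfl, rfl⟩
    · exact Or.inr (Or.inr (Or.inl ⟨m, rfl, rfl⟩))
    · exact Or.inr (Or.inl ⟨i, j, rfl, rfl⟩)
    · exact Or.inr (Or.inr (Or.inr ⟨m, rfl, rfl⟩))
  · rintro (⟨i, j, rfl, rfl⟩ | ⟨i, j, rfl, rfl⟩ | ⟨m, rfl, rfl⟩ | ⟨m, rfl, rfl⟩)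
    · exact ⟨by simp, Or.inl (Or.inl ⟨i, j, rfl, rfl⟩)⟩
    · exact ⟨by simp, Or.inr (Or.inl ⟨i, j, rfl, rfl⟩)⟩
    · exact ⟨by simp, Or.inl (Or.inr ⟨m, rfl, rfl⟩)⟩
    · exact ⟨by simp, Or.inr (Or.inr ⟨m, rfl, rfl⟩)⟩

lemma adj_xy (i : Fin x) (j : Fin y) :
    (Bgraph x y k w).Adj (.inl (.inl i)) (.inl (.inr j)) :=
  (badj _ _).mpr (Or.inl ⟨i, j, rfl, rfl⟩)

lemma adj_pw (m : Fin k) : (Bgraph x y k w).Adj (.inr m) (.inl (.inl w)) :=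
  (badj _ _).mpr (Or.inr (Or.inr (Or.inl ⟨m, rfl, rfl⟩)))

lemma not_adj_xx (i i' : Fin x) :
    ¬ (Bgraph x y k w).Adj (.inl (.inl i)) (.inl (.inl i')) := by
  rw [badj]; rintro (⟨_,_,_,h⟩|⟨_,_,h,_⟩|⟨_,h,_⟩|⟨_,_,h⟩) <;> simp_all

lemma not_adj_yy (j j' : Fin y) :
    ¬ (Bgraph x y k w).Adj (.inl (.inr j)) (.inl (.inr j')) := by
  rw [badj]; rintro (⟨_,_,h,_⟩|⟨_,_,_,h⟩|⟨_,h,_⟩|⟨_,h,_⟩) <;> simp_all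

lemma not_adj_pp (m m' : Fin k) :
    ¬ (Bgraph x y k w).Adj (.inr m) (.inr m') := by
  rw [badj]; rintro (⟨_,_,h,_⟩|⟨_,_,h,_⟩|⟨_,_,h⟩|⟨_,h,_⟩) <;> simp_all

lemma not_adj_py (m : Fin k) (j : Fin y) :
    ¬ (Bgraph x y k w).Adj (.inr m) (.inl (.inr j)) := by
  rw [badj]; rintro (⟨_,_,h,_⟩|⟨_,_,h,_⟩|⟨_,_,h⟩|⟨_,h,_⟩) <;> simp_all

lemma adj_px_iff (m : Fin k) (i : Fin x) :
    (Bgraph x y k w).Adj (.inr m) (.inl (.inl i)) ↔ i = w := by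
  rw [badj]
  constructor
  · rintro (⟨_,_,h,_⟩|⟨_,_,h,_⟩|⟨_,_,h⟩|⟨_,h,_⟩) <;> simp_all
  · rintro rfl; exact Or.inr (Or.inr (Or.inl ⟨m, rfl, rfl⟩))

lemma deg_x (i : Fin x) (hi : i ≠ w) :
    (Bgraph x y k w).degree (.inl (.inl i)) = y := by
  have hnb : (Bgraph x y k w).neighborFinset (.inl (.inl i)) =
      Finset.univ.map ⟨fun j : Fin y => (.inl (.inr j) : (Fin x ⊕ Fin y) ⊕ Fin k),
        fun a b h => by simpa using h⟩ := by
    ext q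
    simp only [SimpleGraph.mem_neighborFinset, mem_map, mem_univ, true_and,
      Function.Embedding.coeFn_mk]
    constructor
    · intro h
      rcases (badj _ _).mp h with ⟨i', j, h1, rfl⟩ | ⟨i', j, h1, h2⟩ | ⟨m, h1, h2⟩ | ⟨m, h1, h2⟩
      · exact ⟨j, rfl⟩
      · simp_all
      · simp_all
      · exact absurd (by simpa using h1) hi
    · rintro ⟨j, rfl⟩; exact adj_xy i j
  rw [SimpleGraph.degree, hnb, card_map, card_univ, Fintype.card_fin]

lemma deg_w : (Bgraph x y k w).degree (.inl (.inl w)) = y + k := by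
  have hnb : (Bgraph x y k w).neighborFinset (.inl (.inl w)) =
      (Finset.univ.map ⟨fun j : Fin y => (.inl (.inr j) : (Fin x ⊕ Fin y) ⊕ Fin k),
        fun a b h => by simpa using h⟩) ∪
      (Finset.univ.map ⟨fun m : Fin k => (.inr m : (Fin x ⊕ Fin y) ⊕ Fin k),
        fun a b h => by simpa using h⟩) := by
    ext q
    simp only [SimpleGraph.mem_neighborFinset, mem_union, mem_map, mem_univ, true_and,
      Function.Embedding.coeFn_mk]
    constructor
    · intro h
      rcases (badj _ _).mp h with ⟨i', j, h1, rfl⟩ | ⟨i', j, h1, h2⟩ | ⟨m, h1, h2⟩ | ⟨m, h1, rfl⟩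
      · exact Or.inl ⟨j, rfl⟩
      · simp_all
      · simp_all
      · exact Or.inr ⟨m, rfl⟩
    · rintro (⟨j, rfl⟩ | ⟨m, rfl⟩)
      · exact adj_xy w j
      · exact (adj_pw m).symm
  rw [SimpleGraph.degree, hnb, card_union_of_disjoint, card_map, card_map, card_univ,
    card_univ, Fintype.card_fin, Fintype.card_fin]
  simp [Finset.disjoint_left]

lemma deg_y (j : Fin y) : (Bgraph x y k w).degree (.inl (.inr j)) = x := by
  have hnb : (Bgraph x y k w).neighborFinset (.inl (.inr j)) =
      Finset.univ.map ⟨fun i : Fin x => (.inl (.inl i) : (Fin x ⊕ Fin y) ⊕ Fin k),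
        fun a b h => by simpa using h⟩ := by
    ext q
    simp only [SimpleGraph.mem_neighborFinset, mem_map, mem_univ, true_and,
      Function.Embedding.coeFn_mk]
    constructor
    · intro h
      rcases (badj _ _).mp h with ⟨i', j', h1, h2⟩ | ⟨i', j', h1, rfl⟩ | ⟨m, h1, h2⟩ | ⟨m, h1, h2⟩
      · simp_all
      · exact ⟨i', rfl⟩
      · simp_all
      · simp_all
    · rintro ⟨i, rfl⟩; exact (adj_xy i j).symm
  rw [SimpleGraph.degree, hnb, card_map, card_univ, Fintype.card_fin]

lemma deg_p (m : Fin k) : (Bgraph x y k w).degree (.inr m) = 1 := by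
  have hnb : (Bgraph x y k w).neighborFinset (.inr m) =
      {(.inl (.inl w) : (Fin x ⊕ Fin y) ⊕ Fin k)} := by
    ext q
    simp only [SimpleGraph.mem_neighborFinset, mem_singleton]
    constructor
    · intro h
      rcases (badj _ _).mp h with ⟨i', j', h1, h2⟩ | ⟨i', j', h1, h2⟩ | ⟨m', h1, rfl⟩ | ⟨m', h1, h2⟩
      · simp_all
      · simp_all
      · rfl
      · simp_all
    · rintro rfl; exact adj_pw m
  rw [SimpleGraph.degree, hnb, card_singleton]

lemma ecc_w (hy : 1 ≤ y) (hx2 : 2 ≤ x) :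
    ecc (Bgraph x y k w) (.inl (.inl w)) = 2 := by
  have j0 : Fin y := ⟨0, hy⟩
  have : Nontrivial (Fin x) := Fin.nontrivial_iff_two_le.mpr hx2
  obtain ⟨i0, hi0⟩ := exists_ne w
  apply le_antisymm
  · apply Finset.sup_le
    rintro (⟨i | j⟩ | m) -
    · by_cases h : w = i
      · subst h
        have hd : (Bgraph x y k w).dist (.inl (.inl w)) (.inl (.inl w)) = 0 :=
          SimpleGraph.dist_self
        omega
      · exact dist_le_two' (.inl (.inr j0)) (adj_xy w j0) ((adj_xy i j0).symm)
    · have hd : (Bgraph x y k w).dist (.inl (.inl w)) (.inl (.inr j)) = 1 :=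
        SimpleGraph.dist_eq_one_iff_adj.mpr (adj_xy w j)
      omega
    · have hd : (Bgraph x y k w).dist (.inl (.inl w)) (.inr m) = 1 :=
        SimpleGraph.dist_eq_one_iff_adj.mpr (adj_pw m).symm
      omega
  · have h2 : (Bgraph x y k w).dist (.inl (.inl w)) (.inl (.inl i0)) = 2 :=
      dist_eq_two'_s14 (by simp [(Ne.symm hi0)]) (not_adj_xx w i0) (.inl (.inr j0))
        (adj_xy w j0) ((adj_xy i0 j0).symm)
    exact h2 ▸ Finset.le_sup (mem_univ (Sum.inl (Sum.inl i0)))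

lemma ecc_x (i : Fin x) (hi : i ≠ w) (hy : 1 ≤ y) (hk : 1 ≤ k) :
    ecc (Bgraph x y k w) (.inl (.inl i)) = 3 := by
  have j0 : Fin y := ⟨0, hy⟩
  have m0 : Fin k := ⟨0, hk⟩
  apply le_antisymm
  · apply Finset.sup_le
    rintro (⟨i' | j⟩ | m) -
    · by_cases h : i = i'
      · subst h
        have hd : (Bgraph x y k w).dist (.inl (.inl i)) (.inl (.inl i)) = 0 :=
          SimpleGraph.dist_self
        omega
      · have := dist_le_two' (G := Bgraph x y k w) (.inl (.inr j0)) (adj_xy i j0)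
          ((adj_xy i' j0).symm)
        omega
    · have hd : (Bgraph x y k w).dist (.inl (.inl i)) (.inl (.inr j)) = 1 :=
        SimpleGraph.dist_eq_one_iff_adj.mpr (adj_xy i j)
      omega
    · exact dist_le_three' (.inl (.inr j0)) (.inl (.inl w)) (adj_xy i j0)
        ((adj_xy w j0).symm) ((adj_pw m).symm)
  · have h3 : (Bgraph x y k w).dist (.inl (.inl i)) (.inr m0) = 3 := by
      apply dist_eq_three' (by simp) (fun h => hi ((adj_px_iff m0 i).mp h.symm)) ?_
        (.inl (.inr j0)) (.inl (.inl w)) (adj_xy i j0) ((adj_xy w j0).symm) ((adj_pw m0).symm)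
      rintro (⟨i' | j⟩ | m) ⟨h1, h2⟩
      · exact not_adj_xx i i' h1
      · exact not_adj_py m0 j h2.symm
      · exact hi ((adj_px_iff m i).mp h1.symm)
    exact h3 ▸ Finset.le_sup (mem_univ (Sum.inr m0))

lemma ecc_y (j : Fin y) (hk : 1 ≤ k) :
    ecc (Bgraph x y k w) (.inl (.inr j)) = 2 := by
  have m0 : Fin k := ⟨0, hk⟩
  apply le_antisymm
  · apply Finset.sup_le
    rintro (⟨i | j'⟩ | m) -
    · have hd : (Bgraph x y k w).dist (.inl (.inr j)) (.inl (.inl i)) = 1 :=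
        SimpleGraph.dist_eq_one_iff_adj.mpr (adj_xy i j).symm
      omega
    · by_cases h : j = j'
      · subst h
        have hd : (Bgraph x y k w).dist (.inl (.inr j)) (.inl (.inr j)) = 0 :=
          SimpleGraph.dist_self
        omega
      · exact dist_le_two' (.inl (.inl w)) ((adj_xy w j).symm) (adj_xy w j')
    · exact dist_le_two' (.inl (.inl w)) ((adj_xy w j).symm) ((adj_pw m).symm)
  · have h2 : (Bgraph x y k w).dist (.inl (.inr j)) (.inr m0) = 2 :=
      dist_eq_two'_s14 (by simp) (fun h => not_adj_py m0 j h.symm) (.inl (.inl w))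
        ((adj_xy w j).symm) ((adj_pw m0).symm)
    exact h2 ▸ Finset.le_sup (mem_univ (Sum.inr m0))

lemma ecc_p (m : Fin k) (hy : 1 ≤ y) (hx2 : 2 ≤ x) :
    ecc (Bgraph x y k w) (.inr m) = 3 := by
  have j0 : Fin y := ⟨0, hy⟩
  have : Nontrivial (Fin x) := Fin.nontrivial_iff_two_le.mpr hx2
  obtain ⟨i0, hi0⟩ := exists_ne w
  apply le_antisymm
  · apply Finset.sup_le
    rintro (⟨i | j⟩ | m') -
    · by_cases h : i = w
      · rw [h]
        have hd : (Bgraph x y k w).dist (.inr m) (.inl (.inl w)) = 1 :=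
          SimpleGraph.dist_eq_one_iff_adj.mpr (adj_pw m)
        omega
      · exact dist_le_three' (.inl (.inl w)) (.inl (.inr j0)) (adj_pw m)
          (adj_xy w j0) ((adj_xy i j0).symm)
    · have := dist_le_two' (G := Bgraph x y k w) (.inl (.inl w)) (adj_pw m) (adj_xy w j)
      omega
    · by_cases h : m = m'
      · subst h
        have hd : (Bgraph x y k w).dist (.inr m) (.inr m) = 0 := SimpleGraph.dist_self
        omega
      · have := dist_le_two' (G := Bgraph x y k w) (.inl (.inl w)) (adj_pw m)
          ((adj_pw m').symm)
        omega
  · have h3 : (Bgraph x y k w).dist (.inr m) (.inl (.inl i0)) = 3 := by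
      apply dist_eq_three' (by simp) (fun h => hi0 ((adj_px_iff m i0).mp h)) ?_
        (.inl (.inl w)) (.inl (.inr j0)) (adj_pw m) (adj_xy w j0) ((adj_xy i0 j0).symm)
      rintro (⟨i' | j⟩ | m') ⟨h1, h2⟩
      · exact not_adj_xx i' i0 h2
      · exact not_adj_py m j h1
      · exact not_adj_pp m m' h1
    exact h3 ▸ Finset.le_sup (mem_univ (Sum.inl (Sum.inl i0)))

end B

/-- Connective eccentricity index of `B_k(x, n-k-x)` (here `y = n - k - x`). -/
theorem cei_Bgraph (n k x y : ℕ) (hn : n = x + y + k) (hk : 1 ≤ k)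
    (hx : 2 ≤ x) (hxy : x ≤ y) (w : Fin x) :
    cei (Bgraph x y k w)
      = (-5 * (x : ℚ)^2 + (5 * (n : ℚ) - 5 * k - 1) * x + 4 * k + n) / 6 := by
  subst hn
  have hy : 1 ≤ y := le_trans (by omega) hxy
  rw [cei, Fintype.sum_sum_type, Fintype.sum_sum_type]
  have hX : ∀ i : Fin x,
      ((Bgraph x y k w).degree (.inl (.inl i)) : ℚ) / (ecc (Bgraph x y k w) (.inl (.inl i)) : ℚ)
      = if i = w then ((y : ℚ) + k) / 2 else (y : ℚ) / 3 := by
    intro i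
    by_cases h : i = w
    · subst h
      rw [deg_w, ecc_w hy hx, if_pos rfl]
      push_cast; ring
    · rw [deg_x i h, ecc_x i h hy hk, if_neg h]
      norm_num
  have hY : ∀ j : Fin y,
      ((Bgraph x y k w).degree (.inl (.inr j)) : ℚ) / (ecc (Bgraph x y k w) (.inl (.inr j)) : ℚ)
      = (x : ℚ) / 2 := by
    intro j; rw [deg_y j, ecc_y j hk]; norm_num
  have hP : ∀ m : Fin k,
      ((Bgraph x y k w).degree (.inr m) : ℚ) / (ecc (Bgraph x y k w) (.inr m) : ℚ)
      = 1 / 3 := by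
    intro m; rw [deg_p m, ecc_p m hy hx]; norm_num
  simp only [hX, hY, hP]
  rw [Finset.sum_const, Finset.sum_const, ← Finset.add_sum_erase _ _ (mem_univ w), if_pos rfl]
  rw [Finset.sum_congr rfl (fun i hi => if_neg (Finset.ne_of_mem_erase hi)),
    Finset.sum_const, Finset.card_erase_of_mem (mem_univ w)]
  simp only [card_univ, Fintype.card_fin, nsmul_eq_mul]
  have : ((x - 1 : ℕ) : ℚ) = (x : ℚ) - 1 := by
    rw [Nat.cast_sub (by omega)]; norm_num
  rw [this]
  push_cast
  field_simp
  ring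
end
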